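/- Let k be an even integer with k ≥ 4, let d = (3k+4)/2, and let C be a symmetric (d,k) circuit code of length 4k+6 whose transition sequence has the form T(C) = (ω₁, x, ω₂, ω₁, x, ω₂), where ω₁ = (1,2,...,k+2) is a bit run and ω₂ = (β₁,...,β_k). Then every coordinate in {1,...,d} appears at least once, and at most twice, in the half-sequence (ω₁, x, ω₂). -/

import Mathlib

/-- The graph of the `d`-dimensional hypercube: vertices are binary vectors of
length `d`, adjacent iff they differ in exactly one coordinate. -/
def hypercube (d : ℕ) : SimpleGraph (Fin d → Bool) where
  Adj x y := hammingDist x y = 1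
  symm := by
    constructor
    intro x y h
    exact (hammingDist_comm y x).trans h
  loopless := by
    constructor
    intro x h
    simp [hammingDist_self] at h

/-- Distance along a cycle of length `N` between positions `i` and `j`. -/
def cycDist {N : ℕ} (i j : ZMod N) : ℕ := min (i - j).val (j - i).val

/-- `x : ZMod N → (Fin d → Bool)` is a `(d,k)` circuit code of length `N`:
a cycle in the hypercube `I(d)` satisfying the spread-`k` distance requirement. -/
structure IsCircuitCode (d k N : ℕ) (x : ZMod N → Fin d → Bool) : Prop where
  inj : Function.Injective x
  adj : ∀ i : ZMod N, (hypercube d).Adj (x i) (x (i + 1))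
  spread : ∀ i j : ZMod N, min (cycDist i j) k ≤ (hypercube d).dist (x i) (x j)

/-- `τ` is the transition sequence of the cycle `x`: `τ i` is the unique
coordinate in which `x i` and `x (i+1)` differ. -/
def IsTransitionSeq {d N : ℕ} (x : ZMod N → Fin d → Bool) (τ : ZMod N → Fin d) : Prop :=
  ∀ (i : ZMod N) (j : Fin d), x (i + 1) j ≠ x i j ↔ j = τ i

/-- The segment of `τ` of length `m` starting at position `start` is a bit run:
all of its entries are distinct. -/
def IsBitRun {d N : ℕ} (τ : ZMod N → Fin d) (start : ZMod N) (m : ℕ) : Prop :=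
  ∀ a b : Fin m, τ (start + ((a : ℕ) : ZMod N)) = τ (start + ((b : ℕ) : ZMod N)) → a = b

/-- `δ(ω)`: the number of coordinates appearing an odd number of times in the
segment of `τ` of length `m` starting at `start`. -/
def segDelta {d N : ℕ} (τ : ZMod N → Fin d) (start : ZMod N) (m : ℕ) : ℕ :=
  (Finset.univ.filter fun c : Fin d =>
    Odd (Finset.univ.filter fun t : Fin m => τ (start + ((t : ℕ) : ZMod N)) = c).card).card

/- ### Auxiliary lemmas -/

lemma my_exists_walk {d : ℕ} : ∀ (n : ℕ) (u v : Fin d → Bool), hammingDist u v = n →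
    ∃ w : (hypercube d).Walk u v, w.length = n := by
  intro n
  induction n with
  | zero =>
    intro u v h
    have : u = v := eq_of_hammingDist_eq_zero h
    subst this; exact ⟨.nil, rfl⟩
  | succ n ih =>
    intro u v h
    have hne : u ≠ v := by
      intro he; subst he; simp [hammingDist_self] at h
    obtain ⟨j, hj⟩ : ∃ j, u j ≠ v j := Function.ne_iff.mp hne
    set u' := Function.update u j (v j) with hu'
    have h1 : hammingDist u u' = 1 := by
      unfold hammingDist
      rw [Finset.card_eq_one]
      refine ⟨j, ?_⟩
      ext i
      simp only [Finset.mem_filter, Finset.mem_univ, true_and, Finset.mem_singleton]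
      constructor
      · intro hi
        by_contra hij
        simp [hu', Function.update_of_ne hij] at hi
      · rintro rfl; simp [hu', hj]
    have h2 : hammingDist u' v = n := by
      have hset : (Finset.univ.filter fun i => u' i ≠ v i)
          = (Finset.univ.filter fun i => u i ≠ v i).erase j := by
        ext i
        simp only [Finset.mem_filter, Finset.mem_univ, true_and, Finset.mem_erase]
        constructor
        · intro hi
          have hij : i ≠ j := by rintro rfl; simp [hu'] at hi
          exact ⟨hij, by rwa [hu', Function.update_of_ne hij] at hi⟩
        · rintro ⟨hij, hi⟩
          rwa [hu', Function.update_of_ne hij]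
      have hj' : j ∈ (Finset.univ.filter fun i => u i ≠ v i) := by simp [hj]
      have : hammingDist u' v = hammingDist u v - 1 := by
        unfold hammingDist
        rw [hset, Finset.card_erase_of_mem hj']
      omega
    obtain ⟨w, hw⟩ := ih u' v h2
    exact ⟨.cons (by exact h1) w, by show w.length + 1 = n + 1; rw [hw]⟩

lemma my_dist_le_hamming {d : ℕ} (u v : Fin d → Bool) :
    (hypercube d).dist u v ≤ hammingDist u v := by
  obtain ⟨w, hw⟩ := my_exists_walk _ u v rfl
  exact hw ▸ SimpleGraph.dist_le w

lemma card_fin_eq_range {d N m : ℕ} (τ : ZMod N → Fin d) (i : ZMod N) (j : Fin d) :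
    (Finset.univ.filter fun t : Fin m => τ (i + ((t : ℕ) : ZMod N)) = j).card
      = ∑ t ∈ Finset.range m, if τ (i + ((t : ℕ) : ZMod N)) = j then 1 else 0 := by
  rw [Finset.card_filter]
  exact Fin.sum_univ_eq_sum_range (fun t : ℕ => if τ (i + ((t : ℕ) : ZMod N)) = j then 1 else 0) m

lemma parity_lemma {d N : ℕ} {x : ZMod N → Fin d → Bool} {τ : ZMod N → Fin d}
    (hτ : IsTransitionSeq x τ) (i : ZMod N) :
    ∀ (m : ℕ) (j : Fin d), (x (i + (m : ZMod N)) j ≠ x i j ↔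
      Odd ((Finset.univ.filter fun t : Fin m => τ (i + ((t : ℕ) : ZMod N)) = j).card)) := by
  intro m
  induction m with
  | zero => intro j; simp
  | succ m ih =>
    intro j
    rw [card_fin_eq_range, Finset.sum_range_succ, ← card_fin_eq_range]
    have hstep := hτ (i + (m : ZMod N)) j
    have hcast : ((m + 1 : ℕ) : ZMod N) = (m : ZMod N) + 1 := by push_cast; ring
    rw [hcast, ← add_assoc]
    have ihj := ih j
    by_cases hj : τ (i + (m : ZMod N)) = j
    · have hne : x (i + (m : ZMod N) + 1) j ≠ x (i + (m : ZMod N)) j := hstep.mpr hj.symm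
      simp only [if_pos hj, Nat.odd_add_one]
      constructor
      · intro h
        intro hodd
        have := ihj.mpr hodd
        revert h hne this
        cases x (i + (m : ZMod N) + 1) j <;> cases x (i + (m : ZMod N)) j <;> cases x i j <;> simp
      · intro h
        have heq : x (i + (m : ZMod N)) j = x i j := by
          by_contra hc
          exact h (ihj.mp hc)
        revert hne heq
        cases x (i + (m : ZMod N) + 1) j <;> cases x (i + (m : ZMod N)) j <;> cases x i j <;> simp
    · have heq : x (i + (m : ZMod N) + 1) j = x (i + (m : ZMod N)) j := by
        by_contra hc
        exact hj (hstep.mp hc).symm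
      rw [if_neg hj, add_zero, heq]
      exact ihj

lemma hamming_eq_segDelta {d N : ℕ} {x : ZMod N → Fin d → Bool} {τ : ZMod N → Fin d}
    (hτ : IsTransitionSeq x τ) (i : ZMod N) (m : ℕ) :
    hammingDist (x i) (x (i + (m : ZMod N))) = segDelta τ i m := by
  unfold hammingDist segDelta
  congr 1
  ext j
  simp only [Finset.mem_filter, Finset.mem_univ, true_and]
  rw [ne_comm]
  exact parity_lemma hτ i m j

/-- The spread condition forces every window of `k` consecutive transitions to be
injective. -/
lemma window_inj {d k N : ℕ} [NeZero N] {x : ZMod N → Fin d → Bool} {τ : ZMod N → Fin d}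
    (hx : IsCircuitCode d k N x) (hτ : IsTransitionSeq x τ)
    (hkN : 2 * k < N) (hk0 : 0 < k)
    (i : ZMod N) : ∀ a b : Fin k,
      τ (i + ((a : ℕ) : ZMod N)) = τ (i + ((b : ℕ) : ZMod N)) → a = b := by
  intro a b hab
  by_contra hne
  -- spread at (i, i + k) gives k ≤ dist ≤ hamming = segDelta
  have hkval : ((k : ℕ) : ZMod N).val = k := ZMod.val_cast_of_lt (by omega)
  have hkne : ((k : ℕ) : ZMod N) ≠ 0 := by
    intro h
    rw [← ZMod.val_eq_zero, hkval] at h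
    omega
  have hcyc : cycDist i (i + (k : ZMod N)) = k := by
    unfold cycDist
    have h1 : i - (i + (k : ZMod N)) = -(k : ZMod N) := by ring
    have h2 : i + (k : ZMod N) - i = (k : ZMod N) := by ring
    rw [h1, h2, hkval, ZMod.neg_val, if_neg hkne, hkval]
    omega
  have hspread := hx.spread i (i + (k : ZMod N))
  rw [hcyc, min_self] at hspread
  have hδ : k ≤ segDelta τ i k := by
    calc k ≤ (hypercube d).dist (x i) (x (i + (k : ZMod N))) := hspread
    _ ≤ hammingDist (x i) (x (i + (k : ZMod N))) := my_dist_le_hamming _ _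
    _ = segDelta τ i k := hamming_eq_segDelta hτ i k
  -- but segDelta ≤ card of the image, which is < k since window not injective
  have himg : (Finset.univ.filter fun c : Fin d =>
      Odd (Finset.univ.filter fun t : Fin k => τ (i + ((t : ℕ) : ZMod N)) = c).card)
        ⊆ Finset.univ.image (fun t : Fin k => τ (i + ((t : ℕ) : ZMod N))) := by
    intro c hc
    simp only [Finset.mem_filter, Finset.mem_univ, true_and] at hc
    have hpos : 0 < (Finset.univ.filter fun t : Fin k =>
        τ (i + ((t : ℕ) : ZMod N)) = c).card := hc.pos
    rw [Finset.card_pos] at hpos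
    obtain ⟨t, ht⟩ := hpos
    simp only [Finset.mem_filter, Finset.mem_univ, true_and] at ht
    exact Finset.mem_image.mpr ⟨t, Finset.mem_univ t, ht⟩
  have hlt : (Finset.univ.image (fun t : Fin k => τ (i + ((t : ℕ) : ZMod N)))).card < k := by
    rcases lt_or_eq_of_le (Finset.card_image_le (s := (Finset.univ : Finset (Fin k)))
      (f := fun t : Fin k => τ (i + ((t : ℕ) : ZMod N)))) with h | h
    · simpa using h
    · exfalso
      rw [Finset.card_univ, Fintype.card_fin] at h
      have hinj := Finset.card_image_iff.mp (by rw [h, Finset.card_univ, Fintype.card_fin])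
      exact hne (hinj (Finset.mem_univ a) (Finset.mem_univ b) hab)
  have := Finset.card_le_card himg
  unfold segDelta at hδ
  omega

lemma gap_lemma {d k N : ℕ} [NeZero N] {x : ZMod N → Fin d → Bool} {τ : ZMod N → Fin d}
    (hx : IsCircuitCode d k N x) (hτ : IsTransitionSeq x τ)
    (hkN : 2 * k < N) (hk0 : 0 < k)
    (p : ZMod N) (t : ℕ) (ht0 : 0 < t) (htk : t < k) :
    τ (p + (t : ZMod N)) ≠ τ p := by
  intro h
  have := window_inj hx hτ hkN hk0 p ⟨t, htk⟩ ⟨0, hk0⟩ (by simpa using h)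
  simp [Fin.ext_iff] at this
  omega

lemma sort3 {P : ℕ → Prop} {a b c : ℕ} (ha : P a) (hb : P b) (hc : P c)
    (hab : a ≠ b) (hac : a ≠ c) (hbc : b ≠ c) :
    ∃ p q r : ℕ, p < q ∧ q < r ∧ P p ∧ P q ∧ P r ∧ r ≤ max a (max b c) := by
  rcases Nat.lt_trichotomy a b with h1 | h1 | h1
  · rcases Nat.lt_trichotomy b c with h2 | h2 | h2
    · exact ⟨a, b, c, h1, h2, ha, hb, hc, by omega⟩
    · omega
    · rcases Nat.lt_trichotomy a c with h3 | h3 | h3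
      · exact ⟨a, c, b, h3, h2, ha, hc, hb, by omega⟩
      · omega
      · exact ⟨c, a, b, h3, h1, hc, ha, hb, by omega⟩
  · omega
  · rcases Nat.lt_trichotomy a c with h2 | h2 | h2
    · exact ⟨b, a, c, h1, h2, hb, ha, hc, by omega⟩
    · omega
    · rcases Nat.lt_trichotomy b c with h3 | h3 | h3
      · exact ⟨b, c, a, h3, h2, hb, hc, ha, by omega⟩
      · omega
      · exact ⟨c, b, a, h3, h1, hc, hb, ha, by omega⟩

/-- For even `k ≥ 4`, `d = (3k+4)/2`, and a symmetric `(d,k)` circuit code of length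
`4k+6` whose transition sequence has the form `(ω₁, x, ω₂, ω₁, x, ω₂)` with
`ω₁ = (1,...,k+2)` (coordinates modeled 0-based as `Fin d`, so `ω₁` consists of the
coordinates of values `0,...,k+1`), every coordinate appears at least once and at
most twice in the half-sequence `(ω₁, x, ω₂)` (positions `0,...,2k+2`). -/
theorem stmt_12 (k d : ℕ) (hk : Even k) (hk4 : 4 ≤ k) (hd : 2 * d = 3 * k + 4)
    (x : ZMod (4 * k + 6) → Fin d → Bool)
    (hx : IsCircuitCode d k (4 * k + 6) x)
    (τ : ZMod (4 * k + 6) → Fin d) (hτ : IsTransitionSeq x τ)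
    (hsym : ∀ i : ZMod (4 * k + 6), τ (i + ((2 * k + 3 : ℕ) : ZMod (4 * k + 6))) = τ i)
    (hω₁ : ∀ i : ℕ, i ≤ k + 1 → (τ ((i : ℕ) : ZMod (4 * k + 6))).val = i) :
    ∀ c : Fin d,
      1 ≤ (Finset.univ.filter
            fun t : Fin (2 * k + 3) => τ (((t : ℕ) : ZMod (4 * k + 6))) = c).card ∧
      (Finset.univ.filter
            fun t : Fin (2 * k + 3) => τ (((t : ℕ) : ZMod (4 * k + 6))) = c).card ≤ 2 := by
  haveI : NeZero (4 * k + 6) := ⟨by omega⟩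
  have hkN : 2 * k < 4 * k + 6 := by omega
  have hk0 : 0 < k := by omega
  -- the gap property, in ℕ form
  have hgap : ∀ (c : Fin d) (p t : ℕ), 0 < t → t < k →
      τ ((p : ZMod (4 * k + 6))) = c → τ (((p + t : ℕ) : ZMod (4 * k + 6))) = c → False := by
    intro c p t ht0 htk hp hpt
    have hcast : ((p + t : ℕ) : ZMod (4 * k + 6)) = (p : ZMod (4 * k + 6)) + (t : ZMod (4 * k + 6)) := by push_cast; ring
    rw [hcast] at hpt
    exact gap_lemma hx hτ hkN hk0 (p : ZMod (4 * k + 6)) t ht0 htk (hpt.trans hp.symm)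
  -- Upper bound: each coordinate appears at most twice in the half-sequence
  have hub : ∀ c : Fin d, (Finset.univ.filter
      fun t : Fin (2 * k + 3) => τ (((t : ℕ) : ZMod (4 * k + 6))) = c).card ≤ 2 := by
    intro c
    by_contra hgt
    push_neg at hgt
    obtain ⟨a, b, e, ha, hb, he, hab, hae, hbe⟩ := Finset.two_lt_card_iff.mp hgt
    simp only [Finset.mem_filter, Finset.mem_univ, true_and] at ha hb he
    have hane : (a : ℕ) ≠ (b : ℕ) := fun h => hab (Fin.ext h)
    have hane2 : (a : ℕ) ≠ (e : ℕ) := fun h => hae (Fin.ext h)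
    have hane3 : (b : ℕ) ≠ (e : ℕ) := fun h => hbe (Fin.ext h)
    obtain ⟨p, q, r, hpq, hqr, hp, hq, hr, hrle⟩ :=
      sort3 (P := fun t => τ ((t : ZMod (4 * k + 6))) = c) ha hb he hane hane2 hane3
    have hr2 : r ≤ 2 * k + 2 := by
      have := a.isLt; have := b.isLt; have := e.isLt
      omega
    -- consecutive occurrences are at least k apart
    have h1 : k ≤ q - p := by
      by_contra h
      exact hgap c p (q - p) (by omega) (by omega) hp (by rwa [Nat.add_sub_cancel' hpq.le])
    have h2 : k ≤ r - q := by
      by_contra h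
      exact hgap c q (r - q) (by omega) (by omega) hq (by rwa [Nat.add_sub_cancel' hqr.le])
    -- by symmetry, the coordinate occurs again at p + 2k + 3
    have hsymp : τ (((p + (2 * k + 3) : ℕ) : ZMod (4 * k + 6))) = c := by
      have := hsym ((p : ℕ) : ZMod (4 * k + 6))
      rw [show ((p : ℕ) : ZMod (4 * k + 6)) + ((2 * k + 3 : ℕ) : ZMod (4 * k + 6))
            = ((p + (2 * k + 3) : ℕ) : ZMod (4 * k + 6)) by push_cast; ring] at this
      rw [this]; exact hp
    have : False := by
      have heq : r + (p + 2 * k + 3 - r) = p + (2 * k + 3) := by omega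
      refine hgap c r (p + 2 * k + 3 - r) (by omega) (by omega) hr ?_
      rw [heq]
      exact hsymp
    exact this
  -- the count function, and its relation to segDelta with start 0
  have hset0 : ∀ c : Fin d, (Finset.univ.filter
        fun t : Fin (2 * k + 3) => τ (((t : ℕ) : ZMod (4 * k + 6))) = c)
      = (Finset.univ.filter
        fun t : Fin (2 * k + 3) => τ ((0 : ZMod (4 * k + 6)) + ((t : ℕ) : ZMod (4 * k + 6))) = c) := by
    intro c
    apply Finset.filter_congr
    intro t _
    rw [zero_add]
  -- spread across the half gives at least k odd coordinates
  have hkS : k ≤ (Finset.univ.filter fun c : Fin d =>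
      Odd (Finset.univ.filter
        fun t : Fin (2 * k + 3) => τ (((t : ℕ) : ZMod (4 * k + 6))) = c).card).card := by
    have hval : (((2 * k + 3 : ℕ) : ZMod (4 * k + 6))).val = 2 * k + 3 :=
      ZMod.val_cast_of_lt (by omega)
    have hne : (((2 * k + 3 : ℕ) : ZMod (4 * k + 6))) ≠ 0 := by
      intro h
      rw [← ZMod.val_eq_zero, hval] at h
      omega
    have hcyc : cycDist (0 : ZMod (4 * k + 6)) ((0 : ZMod (4 * k + 6)) + ((2 * k + 3 : ℕ) : ZMod (4 * k + 6))) = 2 * k + 3 := by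
      unfold cycDist
      rw [zero_add]
      rw [show (0 : ZMod (4 * k + 6)) - ((2 * k + 3 : ℕ) : ZMod (4 * k + 6)) = -((2 * k + 3 : ℕ) : ZMod (4 * k + 6)) by ring,
        show ((2 * k + 3 : ℕ) : ZMod (4 * k + 6)) - 0 = ((2 * k + 3 : ℕ) : ZMod (4 * k + 6)) by ring,
        ZMod.neg_val, if_neg hne, hval]
      omega
    have hspread := hx.spread (0 : ZMod (4 * k + 6)) ((0 : ZMod (4 * k + 6)) + ((2 * k + 3 : ℕ) : ZMod (4 * k + 6)))
    rw [hcyc] at hspread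
    have hmin : min (2 * k + 3) k = k := by omega
    rw [hmin] at hspread
    calc k ≤ (hypercube d).dist (x 0) (x ((0 : ZMod (4 * k + 6)) + ((2 * k + 3 : ℕ) : ZMod (4 * k + 6)))) := hspread
      _ ≤ hammingDist (x 0) (x ((0 : ZMod (4 * k + 6)) + ((2 * k + 3 : ℕ) : ZMod (4 * k + 6)))) :=
          my_dist_le_hamming _ _
      _ = segDelta τ 0 (2 * k + 3) := hamming_eq_segDelta hτ 0 (2 * k + 3)
      _ = _ := by
          unfold segDelta
          congr 1
          ext c
          simp only [Finset.mem_filter, Finset.mem_univ, true_and]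
          rw [← hset0 c]
  -- total count over all coordinates
  have htot : ∑ c : Fin d, (Finset.univ.filter
      fun t : Fin (2 * k + 3) => τ (((t : ℕ) : ZMod (4 * k + 6))) = c).card = 2 * k + 3 := by
    have := Finset.card_eq_sum_card_fiberwise
      (f := fun t : Fin (2 * k + 3) => τ (((t : ℕ) : ZMod (4 * k + 6))))
      (s := Finset.univ) (t := Finset.univ) (fun x _ => Finset.mem_univ _)
    simp only [Finset.card_univ, Fintype.card_fin] at this
    omega
  intro c
  refine ⟨?_, hub c⟩
  -- Lower bound
  by_contra hlt
  push_neg at hlt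
  have hc0 : (Finset.univ.filter
      fun t : Fin (2 * k + 3) => τ (((t : ℕ) : ZMod (4 * k + 6))) = c).card = 0 := by omega
  set cnt := fun c : Fin d => (Finset.univ.filter
      fun t : Fin (2 * k + 3) => τ (((t : ℕ) : ZMod (4 * k + 6))) = c).card with hcnt
  set S := Finset.univ.filter fun c : Fin d => Odd (cnt c) with hS
  set T := Finset.univ.filter fun c : Fin d => ¬ Odd (cnt c) with hT
  have hsplit : ∑ c ∈ S, cnt c + ∑ c ∈ T, cnt c = 2 * k + 3 := by
    rw [hS, hT, Finset.sum_filter_add_sum_filter_not]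
    exact htot
  have hSsum : ∑ c ∈ S, cnt c = S.card := by
    have h1 : ∀ c' ∈ S, cnt c' = 1 := by
      intro c' hc'
      rw [hS, Finset.mem_filter] at hc'
      have h2 : cnt c' ≤ 2 := hub c'
      rcases hc'.2 with ⟨m, hm⟩
      omega
    rw [Finset.sum_congr rfl h1, Finset.sum_const, smul_eq_mul, mul_one]
  have hcT : c ∈ T := by
    rw [hT, Finset.mem_filter]
    exact ⟨Finset.mem_univ c, by rw [hcnt]; simp [hc0]⟩
  have hTsum : ∑ c' ∈ T, cnt c' ≤ 2 * (T.card - 1) := by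
    rw [← Finset.add_sum_erase T cnt hcT]
    have h0 : cnt c = 0 := hc0
    have hle : ∑ c' ∈ T.erase c, cnt c' ≤ (T.erase c).card * 2 := by
      apply Finset.sum_le_card_nsmul
      intro c' _
      exact hub c'
    rw [Finset.card_erase_of_mem hcT] at hle
    have hTpos : 1 ≤ T.card := Finset.card_pos.mpr ⟨c, hcT⟩
    omega
  have hST : S.card + T.card = d := by
    rw [hS, hT]
    rw [Finset.card_filter_add_card_filter_not]
    simp
  have hkey : S.card + ∑ c' ∈ T, cnt c' = 2 * k + 3 := by
    rw [← hSsum]; exact hsplit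
  have hTpos : 1 ≤ T.card := Finset.card_pos.mpr ⟨c, hcT⟩
  clear_value cnt S T
  omega
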